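/- Fix q ∈ [0,1), ν ∈ [0,1), ᾱ > 0 and ρ ∈ (0,1), and let f be the tilted step distribution with parameters (q, ᾱ, ν, ρ). Then f(n) ≥ 0 for all n ∈ ℕ and Σ_{n∈ℕ} f(n) = 1; that is, f is a probability mass function on ℕ. -/

import Mathlib

/-- The step distribution with parameters `(q, ᾱ, ν)`:
`p(0) = 1 − ᾱ(1−q)/(1+ᾱ)` and
`p(n) = (ᾱ(1−q)(1−ν)/(1+ᾱ)²)·((ν+ᾱ)/(1+ᾱ))^{n−1}` for `n ≥ 1`. -/
noncomputable def stepDist (q a ν : ℝ) : ℕ → ℝ := fun n =>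
  if n = 0 then 1 - a * (1 - q) / (1 + a)
  else (a * (1 - q) * (1 - ν) / (1 + a) ^ 2) * ((ν + a) / (1 + a)) ^ (n - 1)

/-- The tilted step distribution with parameters `(q, ᾱ, ν, ρ)`:
`f(n) = λ ρ^n p(n)` where `γ = (1−ρ)/(1−νρ)` and `λ = (1+ᾱγ)/(1+qᾱγ)`. -/
noncomputable def tiltedStepDist (q a ν ρ : ℝ) : ℕ → ℝ := fun n =>
  ((1 + a * ((1 - ρ) / (1 - ν * ρ))) / (1 + q * a * ((1 - ρ) / (1 - ν * ρ)))) *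
    ρ ^ n * stepDist q a ν n

/-- For `q ∈ [0,1)`, `ν ∈ [0,1)`, `ᾱ > 0`, `ρ ∈ (0,1)`, the tilted step
distribution is a probability mass function on `ℕ`. -/
theorem tiltedStepDist_isPMF (q ν a ρ : ℝ)
    (hq0 : 0 ≤ q) (hq1 : q < 1) (hν0 : 0 ≤ ν) (hν1 : ν < 1) (ha : 0 < a)
    (hρ0 : 0 < ρ) (hρ1 : ρ < 1) :
    (∀ n : ℕ, 0 ≤ tiltedStepDist q a ν ρ n) ∧
    (∑' n : ℕ, tiltedStepDist q a ν ρ n) = 1 := by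
  have h1a : (0:ℝ) < 1 + a := by linarith
  have hνρ : 0 < 1 - ν * ρ := by nlinarith
  have hγ : 0 < (1 - ρ) / (1 - ν * ρ) := div_pos (by linarith) hνρ
  have hlamden : 0 < 1 + q * a * ((1 - ρ) / (1 - ν * ρ)) := by positivity
  have hlam : 0 < (1 + a * ((1 - ρ) / (1 - ν * ρ))) / (1 + q * a * ((1 - ρ) / (1 - ν * ρ))) :=
    div_pos (by positivity) hlamden
  have hr0 : 0 ≤ (ν + a) / (1 + a) := div_nonneg (by linarith) h1a.le
  have hr1 : (ν + a) / (1 + a) < 1 := by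
    rw [div_lt_one h1a]; linarith
  have hp : ∀ n : ℕ, 0 ≤ stepDist q a ν n := by
    intro n
    unfold stepDist
    split
    · have : a * (1 - q) / (1 + a) ≤ 1 := by
        rw [div_le_one h1a]; nlinarith
      linarith
    · apply mul_nonneg
      · exact div_nonneg (mul_nonneg (mul_nonneg ha.le (by linarith)) (by linarith)) (by positivity)
      · exact pow_nonneg hr0 _
  constructor
  · intro n
    unfold tiltedStepDist
    have := hp n
    positivity
  · -- summation
    set L : ℝ := (1 + a * ((1 - ρ) / (1 - ν * ρ))) / (1 + q * a * ((1 - ρ) / (1 - ν * ρ)))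
      with hL
    set c : ℝ := a * (1 - q) * (1 - ν) / (1 + a) ^ 2 with hc
    set r : ℝ := (ν + a) / (1 + a) with hrdef
    have hfn : ∀ n : ℕ, tiltedStepDist q a ν ρ (n + 1) = (L * c * ρ) * (ρ * r) ^ n := by
      intro n
      unfold tiltedStepDist stepDist
      simp only [Nat.add_sub_cancel, Nat.succ_ne_zero, if_false]
      rw [mul_pow, pow_succ]
      ring
    have hρr : |ρ * r| < 1 := by
      rw [abs_of_nonneg (by positivity)]
      nlinarith
    have hsum1 : Summable (fun n : ℕ => tiltedStepDist q a ν ρ (n + 1)) := by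
      simp only [hfn]
      exact (summable_geometric_of_abs_lt_one hρr).mul_left _
    have hsum : Summable (tiltedStepDist q a ν ρ) := (summable_nat_add_iff 1).mp hsum1
    rw [Summable.tsum_eq_zero_add hsum]
    have ht : (∑' n : ℕ, tiltedStepDist q a ν ρ (n + 1)) = (L * c * ρ) * (1 - ρ * r)⁻¹ := by
      simp only [hfn]
      rw [tsum_mul_left, tsum_geometric_of_abs_lt_one hρr]
    rw [ht]
    have h0 : tiltedStepDist q a ν ρ 0 = L * (1 - a * (1 - q) / (1 + a)) := by
      unfold tiltedStepDist stepDist; simp [hL]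
    have hD : (0:ℝ) < 1 + a - ρ * (ν + a) := by nlinarith
    have hden2 : (0:ℝ) < 1 - ν * ρ + q * a * (1 - ρ) := by nlinarith
    have hLsimp : L = (1 - ν * ρ + a * (1 - ρ)) / (1 - ν * ρ + q * a * (1 - ρ)) := by
      rw [hL]
      rw [div_eq_div_iff hlamden.ne' hden2.ne']
      have hne : (1:ℝ) - ρ * ν ≠ 0 := by nlinarith
      field_simp
    have hp0 : (1:ℝ) - a * (1 - q) / (1 + a) = (1 + q * a) / (1 + a) := by
      field_simp
      ring
    have hrr : (1:ℝ) - ρ * r = (1 + a - ρ * (ν + a)) / (1 + a) := by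
      rw [hrdef]
      field_simp
    rw [h0, hp0, hrr, hLsimp, hc, inv_div]
    field_simp [hden2.ne', h1a.ne', hD.ne']
    rw [div_eq_iff (by nlinarith)]
    ring
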